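/- Let E be a connected complete nodal curve of arithmetic genus one over an algebraically closed field with minimal elliptic subcurve Z, let p₁,…,p_m be distinct smooth points of E such that (E, p₁,…,p_m) is semistable, and suppose d: {components of E} → ℤ is a function satisfying: d(F) = 1 whenever F contains some p_i, and d(F) = d(G) + 1 whenever F, G are adjacent with l(F,Z) = l(G,Z) − 1, where l(−,Z) is dual-graph distance to Z. Then l(p₁,Z) = l(p₂,Z) = ⋯ = l(p_m,Z), i.e. (E, p₁,…,p_m) is balanced. -/
import Mathlib


open Finset

/-- **Balancedness of semistable tails.**  Let `E` be a connected complete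
nodal curve of arithmetic genus one with dual graph `G` (vertices = components)
and minimal elliptic subcurve `Z` (so every cycle of `G` lies in `Z`, the
complement being trees of rational curves), and let `p₁,…,p_m` be distinct
smooth marked points, `marked i` the component carrying `p_i`, such that
`(E,p₁,…,p_m)` is semistable (every component outside `Z` has at least two
distinguished points).  Write `l(v,Z)` for the dual-graph distance to `Z`.
Suppose `d :` components `→ ℤ` satisfies `d(F) = 1` whenever `F` carries a
marked point, `d` is constant on `Z`, and `d(F) = d(G) + 1` whenever `F, G`
are adjacent with `l(F,Z) = l(G,Z) − 1`.  Then
`l(p₁,Z) = l(p₂,Z) = ⋯ = l(p_m,Z)`, i.e. `(E,p₁,…,p_m)` is balanced. -/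
theorem stmt18 (V : Type) [Fintype V] [DecidableEq V]
    (G : SimpleGraph V) [DecidableRel G.Adj] (hconn : G.Connected)
    (Z : Finset V) (hZne : Z.Nonempty)
    (hforest : ∀ (v : V) (w : G.Walk v v), w.IsCycle → ∀ x ∈ w.support, x ∈ Z)
    (m : ℕ) (hm : 1 ≤ m) (marked : Fin m → V)
    (hsemi : ∀ v : V, v ∉ Z →
      2 ≤ G.degree v + (Finset.univ.filter fun i => marked i = v).card)
    (lZ : V → ℕ)
    (hlZ : ∀ v : V, lZ v = sInf ((fun z => G.dist v z) '' (Z : Set V)))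
    (d : V → ℤ)
    (hd1 : ∀ i : Fin m, d (marked i) = 1)
    (hdZ : ∀ u v : V, u ∈ Z → v ∈ Z → d u = d v)
    (hrec : ∀ u v : V, G.Adj u v → lZ u + 1 = lZ v → d u = d v + 1) :
    ∀ i j : Fin m, lZ (marked i) = lZ (marked j) := by

  -- the constant value of `d` on `Z`
  obtain ⟨z₀, hz₀⟩ := hZne
  -- basic facts about `lZ`
  have hset : ∀ v : V, ((fun z => G.dist v z) '' (Z : Set V)).Nonempty :=
    fun v => ⟨G.dist v z₀, z₀, hz₀, rfl⟩
  have hmem : ∀ v : V, ∃ z ∈ Z, G.dist v z = lZ v := by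
    intro v
    have := Nat.sInf_mem (hset v)
    rw [← hlZ v] at this
    obtain ⟨z, hz, hz'⟩ := this
    exact ⟨z, hz, hz'⟩
  have hle : ∀ v : V, ∀ z ∈ Z, lZ v ≤ G.dist v z := by
    intro v z hz
    rw [hlZ v]
    exact Nat.sInf_le ⟨z, hz, rfl⟩
  have hZ0 : ∀ z ∈ Z, lZ z = 0 := by
    intro z hz
    have := hle z z hz
    simpa [SimpleGraph.dist_self] using this
  -- key: d v = d z₀ - lZ v
  have key : ∀ n : ℕ, ∀ v : V, lZ v = n → d v = d z₀ - n := by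
    intro n
    induction n with
    | zero =>
      intro v hv
      obtain ⟨z, hz, hdist⟩ := hmem v
      rw [hv] at hdist
      have hvz : v = z := ((hconn v z).dist_eq_zero_iff).mp hdist
      simpa using hdZ v z₀ (hvz ▸ hz) hz₀
    | succ n ih =>
      intro v hv
      obtain ⟨z, hz, hdist⟩ := hmem v
      rw [hv] at hdist
      obtain ⟨p, hp⟩ := (hconn v z).exists_walk_length_eq_dist
      rw [hdist] at hp
      cases p with
      | nil => simp at hp
      | cons hadj q =>
        rename_i u
        simp only [SimpleGraph.Walk.length_cons, Nat.succ.injEq] at hp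
        -- lZ u ≤ n
        have h1 : lZ u ≤ n := le_trans (hle u z hz) (hp ▸ SimpleGraph.dist_le q)
        -- lZ v ≤ lZ u + 1
        have h2 : lZ v ≤ lZ u + 1 := by
          obtain ⟨z', hz', hdist'⟩ := hmem u
          obtain ⟨q', hq'⟩ := (hconn u z').exists_walk_length_eq_dist
          calc lZ v ≤ G.dist v z' := hle v z' hz'
            _ ≤ (SimpleGraph.Walk.cons hadj q').length := SimpleGraph.dist_le _
            _ = q'.length + 1 := by simp [SimpleGraph.Walk.length_cons]
            _ = lZ u + 1 := by rw [hq', hdist']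
        have h3 : lZ u = n := le_antisymm h1 (by omega)
        have := hrec u v hadj.symm (by omega)
        have := ih u h3
        push_cast
        omega
  -- conclude
  intro i j
  have hi := key (lZ (marked i)) (marked i) rfl
  have hj := key (lZ (marked j)) (marked j) rfl
  rw [hd1 i] at hi
  rw [hd1 j] at hj
  omega
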